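/- Let $r \ge 2$, $t \ge 2$, and $n$ be positive integers, and let $k = (r-1)t + 1$. Then there exists an $r$-uniform hypergraph $H$ on $n$ vertices with minimum codegree $\delta_{r-1}(H) \ge n/k - 1$ that has no $t$-shallow hitting edge set. Concretely: partition the vertex set into $A$ with $|A| = \lceil n/k - 1 \rceil$ and $B$ with $|B| = n - |A|$, and take as edges all $r$-subsets meeting $A$; this hypergraph has no $t$-shallow hitting edge set. -/

import Mathlib

set_option maxHeartbeats 1000000


/-- For all `r ≥ 2`, `t ≥ 2`, `n ≥ 1` there is an `r`-uniform hypergraph on `n` vertices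
with minimum codegree `δ_{r-1} ≥ n/((r-1)t+1) - 1` and no `t`-shallow hitting edge set. -/
theorem exists_hypergraph_large_codegree_no_shallow_hitting
    (r t n : ℕ) (hr : 2 ≤ r) (ht : 2 ≤ t) (hn : 1 ≤ n) :
    ∃ E : Finset (Finset (Fin n)),
      -- r-uniform
      (∀ e ∈ E, e.card = r) ∧
      -- minimum codegree at least n/((r-1)t+1) - 1
      (∀ s : Finset (Fin n), s.card = r - 1 →
        (n : ℚ) / ((r-1)*t+1) - 1 ≤ ((Finset.univ.filter fun v => insert v s ∈ E).card : ℚ)) ∧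
      -- no t-shallow hitting edge set
      ¬ ∃ M ⊆ E, ∀ v : Fin n,
          1 ≤ (M.filter fun e => v ∈ e).card ∧ (M.filter fun e => v ∈ e).card ≤ t := by
  obtain ⟨k, hk⟩ : ∃ k, k = (r-1)*t+1 := ⟨_, rfl⟩
  have hkr : 2*r - 1 ≤ k := by
    have h1 : (r-1)*2 ≤ (r-1)*t := Nat.mul_le_mul_left _ ht
    omega
  have hk3 : 3 ≤ k := by omega
  have hkpos : 0 < k := by omega
  obtain ⟨q, hq⟩ : ∃ q, q = (n + k - 1)/k := ⟨_, rfl⟩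
  have hq1 : 1 ≤ q := hq ▸ (Nat.one_le_div_iff hkpos).2 (by omega)
  obtain ⟨m, hm⟩ : ∃ m, m = q - 1 := ⟨_, rfl⟩
  -- numeric facts about m
  have hdm : k * q + (n + k - 1) % k = n + k - 1 := by rw [hq]; exact Nat.div_add_mod _ _
  have hml : (n + k - 1) % k < k := Nat.mod_lt _ hkpos
  have hrel : k * m + k = k * q := by
    have : m + 1 = q := by omega
    rw [← this]; ring
  obtain ⟨KQ, hKQ⟩ : ∃ x, k * q = x := ⟨_, rfl⟩
  obtain ⟨KM, hKM⟩ : ∃ x, k * m = x := ⟨_, rfl⟩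
  obtain ⟨R, hR⟩ : ∃ x, (n + k - 1) % k = x := ⟨_, rfl⟩
  rw [hKQ, hR] at hdm
  rw [hR] at hml
  rw [hKQ, hKM] at hrel
  have hub : KM ≤ n - 1 := by omega
  have hlb : n ≤ KQ := by omega
  have hmn : m ≤ n := by
    by_contra h
    push_neg at h
    have : k * m ≥ 1 * m := Nat.mul_le_mul_right _ (by omega)
    omega
  -- rational lower bound : n/k - 1 ≤ m
  have hmQ : (n : ℚ) / k - 1 ≤ (m : ℚ) := by
    rw [sub_le_iff_le_add, div_le_iff₀ (by exact_mod_cast hkpos)]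
    have : (n : ℚ) ≤ (KM : ℚ) + k := by
      have : n ≤ KM + k := by omega
      exact_mod_cast this
    calc (n : ℚ) ≤ (KM : ℚ) + k := this
      _ = (k : ℚ) * m + k := by rw [← hKM]; push_cast; ring
      _ = ((m : ℚ) + 1) * k := by ring
  -- choose the set A
  obtain ⟨A, -, hAcard⟩ := Finset.exists_subset_card_eq (s := (Finset.univ : Finset (Fin n))) (n := m)
    (by simpa using hmn)
  -- the edge set
  refine ⟨Finset.univ.powerset.filter fun e => e.card = r ∧ (e ∩ A).Nonempty, ?_, ?_, ?_⟩
  · intro e he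
    exact ((Finset.mem_filter.1 he).2).1
  · -- codegree
    intro s hs
    have hcast : ((r : ℚ) - 1) * t + 1 = (k : ℚ) := by
      have h1 : ((r - 1 : ℕ) : ℚ) = (r : ℚ) - 1 := by
        rw [Nat.cast_sub (by omega : 1 ≤ r), Nat.cast_one]
      rw [hk]; push_cast [h1]; ring
    rw [hcast]
    by_cases hsa : (s ∩ A).Nonempty
    · -- all v ∉ s work
      have hsub : sᶜ ⊆ Finset.univ.filter fun v =>
          insert v s ∈ Finset.univ.powerset.filter fun e => e.card = r ∧ (e ∩ A).Nonempty := by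
        intro v hv
        rw [Finset.mem_compl] at hv
        simp only [Finset.mem_filter, Finset.mem_univ, Finset.mem_powerset, true_and]
        refine ⟨Finset.subset_univ _, ?_, ?_⟩
        · rw [Finset.card_insert_of_notMem hv, hs]; omega
        · obtain ⟨w, hw⟩ := hsa
          rw [Finset.mem_inter] at hw
          exact ⟨w, Finset.mem_inter.2 ⟨Finset.mem_insert_of_mem hw.1, hw.2⟩⟩
      have hcard : n - (r - 1) ≤ (Finset.univ.filter fun v =>
          insert v s ∈ Finset.univ.powerset.filter fun e =>
            e.card = r ∧ (e ∩ A).Nonempty).card := by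
        have := Finset.card_le_card hsub
        rwa [Finset.card_compl, hs, Fintype.card_fin] at this
      have hrn : r - 1 ≤ n := by simpa [hs] using Finset.card_le_univ s
      have h1 : ((n - (r-1) : ℕ) : ℚ) ≤ _ := Nat.cast_le.2 hcard
      refine le_trans ?_ h1
      rw [Nat.cast_sub hrn, Nat.cast_sub (by omega : 1 ≤ r)]
      -- n/k - 1 ≤ n - (r - 1)
      have hkrQ : (2 : ℚ) * r - 1 ≤ k := by
        have h2 : ((2*r - 1 : ℕ) : ℚ) ≤ (k : ℚ) := Nat.cast_le.2 hkr
        rw [Nat.cast_sub (by omega : 1 ≤ 2*r)] at h2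
        push_cast at h2
        linarith
      have hrnQ : (r : ℚ) - 1 ≤ n := by
        have h2 : ((r - 1 : ℕ) : ℚ) ≤ (n : ℚ) := Nat.cast_le.2 hrn
        rw [Nat.cast_sub (by omega : 1 ≤ r)] at h2
        push_cast at h2
        linarith
      have hrQ : (2 : ℚ) ≤ r := by exact_mod_cast hr
      clear h1 hcard hsub hsa hs hmQ hdm hrel hub hlb
      push_cast
      rw [sub_le_iff_le_add, div_le_iff₀ (by positivity)]
      nlinarith [mul_nonneg (by linarith : (0:ℚ) ≤ (n : ℚ) - r + 2)
          (by linarith : (0:ℚ) ≤ (k : ℚ) - (2*r - 1)),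
        mul_nonneg (by linarith : (0:ℚ) ≤ (n : ℚ) - (r - 1)) (by linarith : (0:ℚ) ≤ (r:ℚ) - 1)]
    · -- s disjoint from A, all v ∈ A work
      have hsub : A ⊆ Finset.univ.filter fun v =>
          insert v s ∈ Finset.univ.powerset.filter fun e => e.card = r ∧ (e ∩ A).Nonempty := by
        intro v hv
        have hvs : v ∉ s := fun hvs => hsa ⟨v, Finset.mem_inter.2 ⟨hvs, hv⟩⟩
        simp only [Finset.mem_filter, Finset.mem_univ, Finset.mem_powerset, true_and]
        refine ⟨Finset.subset_univ _, ?_, ⟨v, Finset.mem_inter.2 ⟨Finset.mem_insert_self _ _, hv⟩⟩⟩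
        rw [Finset.card_insert_of_notMem hvs, hs]; omega
      have hcard := Finset.card_le_card hsub
      rw [hAcard] at hcard
      exact le_trans hmQ (by exact_mod_cast hcard)
  · -- no t-shallow hitting
    rintro ⟨M, hME, hM⟩
    have hMe : ∀ e ∈ M, e.card = r ∧ (e ∩ A).Nonempty :=
      fun e he => (Finset.mem_filter.1 (hME he)).2
    -- double counting lemma
    have swap : ∀ S : Finset (Fin n),
        ∑ v ∈ S, (M.filter fun e => v ∈ e).card = ∑ e ∈ M, (S.filter fun v => v ∈ e).card := by
      intro S
      simp only [Finset.card_filter]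
      exact Finset.sum_comm
    -- |M| ≤ t * m
    have hM1 : M.card ≤ t * m := by
      have h1 : M.card * 1 ≤ ∑ e ∈ M, (A.filter fun v => v ∈ e).card := by
        have := Finset.card_nsmul_le_sum M (fun e => (A.filter fun v => v ∈ e).card) 1
          (fun e he => by
            obtain ⟨w, hw⟩ := (hMe e he).2
            rw [Finset.mem_inter] at hw
            exact Finset.card_pos.2 ⟨w, Finset.mem_filter.2 ⟨hw.2, hw.1⟩⟩)
        simpa using this
      have h2 : ∑ v ∈ A, (M.filter fun e => v ∈ e).card ≤ A.card * t := by
        have := Finset.sum_le_card_nsmul A (fun v => (M.filter fun e => v ∈ e).card) t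
          (fun v _ => (hM v).2)
        simpa using this
      rw [← swap A] at h1
      rw [hAcard] at h2
      calc M.card = M.card * 1 := (mul_one _).symm
        _ ≤ ∑ v ∈ A, (M.filter fun e => v ∈ e).card := h1
        _ ≤ m * t := h2
        _ = t * m := mul_comm _ _
    -- coverage of complement of A
    have hB : n - m ≤ (r - 1) * M.card := by
      have hBcard : (Aᶜ : Finset (Fin n)).card = n - m := by
        rw [Finset.card_compl, hAcard, Fintype.card_fin]
      have h1 : (Aᶜ : Finset (Fin n)).card * 1 ≤ ∑ v ∈ Aᶜ, (M.filter fun e => v ∈ e).card := by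
        have := Finset.card_nsmul_le_sum (Aᶜ : Finset (Fin n))
          (fun v => (M.filter fun e => v ∈ e).card) 1 (fun v _ => (hM v).1)
        simpa using this
      have h2 : ∑ e ∈ M, ((Aᶜ : Finset (Fin n)).filter fun v => v ∈ e).card ≤ M.card * (r-1) := by
        refine Finset.sum_le_card_nsmul M _ (r-1) (fun e he => ?_)
        have hfe : ((Aᶜ : Finset (Fin n)).filter fun v => v ∈ e) = e \ A := by
          ext v
          simp [Finset.mem_sdiff, Finset.mem_filter, Finset.mem_compl, and_comm]
        rw [hfe]
        have hsd := Finset.card_sdiff_add_card_inter e A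
        have hone : 1 ≤ (e ∩ A).card := Finset.card_pos.2 (hMe e he).2
        have := (hMe e he).1
        omega
      rw [← swap (Aᶜ : Finset (Fin n))] at h2
      calc n - m = (Aᶜ : Finset (Fin n)).card * 1 := by rw [hBcard, mul_one]
        _ ≤ ∑ v ∈ Aᶜ, (M.filter fun e => v ∈ e).card := h1
        _ ≤ M.card * (r-1) := h2
        _ = (r-1) * M.card := mul_comm _ _
    -- combine
    have hchain : n - m ≤ (r-1) * (t * m) :=
      le_trans hB (Nat.mul_le_mul_left _ hM1)
    have hkm : k * m = (r-1)*(t*m) + m := by rw [hk]; ring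
    rw [hKM] at hkm
    omega
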